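/- Let κ ∈ (−1,1)∖{0}, let k ≥ 1 and m ≥ 0 be integers, and let r ∈ (0, |κ|). Then (−1)^m P_k^{(m)}(κ²) = (κ/(2πi)) ∮_{|w−κ|=r} w^{m−1}(1−w²)^k/(w−κ)^{m+1} dw, where the contour is the positively oriented circle of radius r centered at κ. -/

import Mathlib

open scoped BigOperators

/-- Pochhammer symbol `(a)_k = a(a+1)⋯(a+k-1)` over ℝ. -/
noncomputable def pochR (a : ℝ) (k : ℕ) : ℝ := ∏ i ∈ Finset.range k, (a + i)

/-- The polynomials `P_n^{(m)}(ε) = ((-1)^m/m!) Σ_{k=0}^n C(n,k) (-ε)^k (2k)_m`. -/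
noncomputable def Ppoly (n m : ℕ) (ε : ℝ) : ℝ :=
  ((-1 : ℝ) ^ m / (m.factorial : ℝ)) * ∑ k ∈ Finset.range (n + 1),
    (n.choose k : ℝ) * (-ε) ^ k * pochR (2 * k) m

open Complex Metric

private lemma aux_cauchy {f : ℂ → ℂ} {c : ℂ} {r : ℝ} (hr : 0 < r)
    (hf : DifferentiableOn ℂ f (Metric.closedBall c r)) (m : ℕ) :
    (∮ w in C(c, r), f w / (w - c) ^ (m + 1)) =
      (2 * Real.pi * Complex.I) * ((m.factorial : ℂ)⁻¹ * iteratedDeriv m f c) := by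
  lift r to NNReal using hr.le with R hR
  have hR0 : 0 < R := by exact_mod_cast hr
  have h := hf.hasFPowerSeriesOnBall hR0
  have h2 := h.factorial_smul (1 : ℂ) m
  have h3 := cauchyPowerSeries_apply f c R m 1
  have hiter : iteratedDeriv m f c = (m.factorial : ℂ) *
      ((2 * Real.pi * Complex.I)⁻¹ * ∮ z in C(c, (R:ℝ)), f z / (z - c) ^ (m + 1)) := by
    rw [iteratedDeriv_eq_iteratedFDeriv, ← h2, h3]
    have : (∮ z in C(c, (R:ℝ)), ((1:ℂ) / (z - c)) ^ m • (z - c)⁻¹ • f z)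
        = ∮ z in C(c, (R:ℝ)), f z / (z - c) ^ (m + 1) := by
      refine circleIntegral.integral_congr hr.le fun z hz => ?_
      have hzc : z - c ≠ 0 := sub_ne_zero.2 (ne_of_mem_sphere hz hr.ne')
      simp only [smul_eq_mul]
      field_simp
      rw [one_div, inv_pow, pow_succ]; field_simp
    rw [this]
    simp [smul_eq_mul]
  rw [hiter]
  have h2pi : (2 * (Real.pi:ℂ) * Complex.I) ≠ 0 := by
    simp [Real.pi_ne_zero, Complex.I_ne_zero]
  have hm : (m.factorial : ℂ) ≠ 0 := by exact_mod_cast m.factorial_ne_zero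
  field_simp

private lemma circleIntegral_sum {ι : Type*} (s : Finset ι) (g : ι → ℂ → ℂ) (c : ℂ) (R : ℝ)
    (h : ∀ j ∈ s, CircleIntegrable (g j) c R) :
    (∮ w in C(c, R), ∑ j ∈ s, g j w) = ∑ j ∈ s, ∮ w in C(c, R), g j w := by
  simp only [circleIntegral]
  rw [← intervalIntegral.integral_finset_sum]
  · congr 1; ext θ; rw [Finset.smul_sum]
  · exact fun j hj => (h j hj).out

theorem stmt4 (κ : ℝ) (hκ : κ ∈ Set.Ioo (-1 : ℝ) 1) (hκ0 : κ ≠ 0) (k m : ℕ) (hk : 1 ≤ k)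
    (r : ℝ) (hr : r ∈ Set.Ioo (0 : ℝ) |κ|) :
    (-1 : ℂ) ^ m * ((Ppoly k m (κ ^ 2) : ℝ) : ℂ) =
      ((κ : ℂ) / (2 * Real.pi * Complex.I)) *
        ∮ w in C((κ : ℂ), r), w ^ ((m : ℤ) - 1) * (1 - w ^ 2) ^ k / (w - (κ : ℂ)) ^ (m + 1) := by
  obtain ⟨hr0, hrκ⟩ := hr
  set c : ℂ := (κ : ℂ) with hc
  have hcabs : r < ‖c‖ := by simpa [hc] using hrκ
  have hc0 : c ≠ 0 := Complex.ofReal_ne_zero.mpr hκ0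
  -- points of the closed ball are nonzero
  have hball : ∀ z ∈ Metric.closedBall c r, z ≠ 0 := by
    intro z hz h0
    rw [Metric.mem_closedBall, h0, dist_comm, dist_eq, sub_zero] at hz
    exact absurd (lt_of_lt_of_le hcabs hz) (lt_irrefl _)
  have hsphere0 : ∀ z ∈ Metric.sphere c r, z ≠ 0 := fun z hz =>
    hball z (Metric.sphere_subset_closedBall hz)
  have hspherec : ∀ z ∈ Metric.sphere c r, z - c ≠ 0 := fun z hz =>
    sub_ne_zero.2 (ne_of_mem_sphere hz hr0.ne')
  set q : ℕ → ℤ := fun j => 2 * j + m - 1 with hq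
  set g : ℕ → ℂ → ℂ := fun j w =>
    (k.choose j : ℂ) * (-1) ^ j * (w ^ q j / (w - c) ^ (m + 1)) with hg
  -- Step A: rewrite the integrand as a finite sum on the sphere
  have stepA : (∮ w in C(c, r), w ^ ((m : ℤ) - 1) * (1 - w ^ 2) ^ k / (w - c) ^ (m + 1))
      = ∮ w in C(c, r), ∑ j ∈ Finset.range (k + 1), g j w := by
    refine circleIntegral.integral_congr hr0.le fun w hw => ?_
    have hw0 : w ≠ 0 := hsphere0 w hw
    have hexp : (1 - w ^ 2) ^ k
        = ∑ j ∈ Finset.range (k + 1), (-(w ^ 2)) ^ j * 1 ^ (k - j) * (k.choose j : ℂ) := by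
      rw [← add_pow, neg_add_eq_sub]
    rw [hexp, Finset.mul_sum, Finset.sum_div]
    refine Finset.sum_congr rfl fun j hj => ?_
    have hpow : w ^ ((m : ℤ) - 1) * (-(w ^ 2)) ^ j = (-1) ^ j * w ^ q j := by
      have h1 : w ^ ((m : ℤ) - 1) * (-(w ^ 2)) ^ j
          = (-1) ^ j * (w ^ ((m : ℤ) - 1) * w ^ ((2 * j : ℕ) : ℤ)) := by
        rw [neg_pow, ← pow_mul, ← zpow_natCast w (2 * j)]; ring
      rw [h1, ← zpow_add₀ hw0]
      congr 1
      simp [hq]; push_cast; ring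
    rw [hg]
    simp only [one_pow, mul_one]
    rw [mul_comm ((k.choose j : ℂ) * (-1) ^ j) _, div_mul_eq_mul_div]
    congr 1
    linear_combination (k.choose j : ℂ) * hpow
  -- integrability of each term
  have hint : ∀ j ∈ Finset.range (k + 1), CircleIntegrable (g j) c r := by
    intro j _
    refine ContinuousOn.circleIntegrable hr0.le ?_
    refine (continuousOn_const.mul ?_)
    refine ContinuousOn.div ?_ ?_ (fun w hw => pow_ne_zero _ (hspherec w hw))
    · exact (continuousOn_id).zpow₀ _ (fun w hw => Or.inl (hsphere0 w hw))
    · exact ((continuousOn_id.sub continuousOn_const).pow _)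
  -- Step C: value of each integral
  have stepC : ∀ j ∈ Finset.range (k + 1), (∮ w in C(c, r), g j w)
      = (2 * Real.pi * Complex.I) * ((k.choose j : ℂ) * (-1) ^ j * (m.factorial : ℂ)⁻¹ *
          (∏ i ∈ Finset.range m, ((q j : ℂ) - i)) * c ^ (q j - m)) := by
    intro j _
    have : (∮ w in C(c, r), g j w)
        = (k.choose j : ℂ) * (-1) ^ j * ∮ w in C(c, r), (fun w : ℂ => w ^ q j) w / (w - c) ^ (m + 1) := by
      rw [← circleIntegral.integral_const_mul]
    rw [this, aux_cauchy hr0 (differentiableOn_zpow _ _ (Or.inl (fun h => hball 0 h rfl))) m]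
    rw [iteratedDeriv_eq_iterate, iter_deriv_zpow]
    push_cast
    ring
  have h2pi : (2 * (Real.pi:ℂ) * Complex.I) ≠ 0 := by
    simp [Real.pi_ne_zero, Complex.I_ne_zero]
  have hcancel : ∀ S : ℂ, c / (2 * Real.pi * Complex.I) * (2 * Real.pi * Complex.I * S)
      = c * S := by
    intro S
    field_simp
  rw [stepA, circleIntegral_sum _ _ _ _ hint, Finset.sum_congr rfl stepC, ← Finset.mul_sum,
    hcancel]
  -- now pure algebra
  have hpoch : ∀ j : ℕ, ((pochR (2 * j) m : ℝ) : ℂ)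
      = ∏ i ∈ Finset.range m, ((q j : ℂ) - i) := by
    intro j
    rw [pochR]
    push_cast
    rw [← Finset.prod_range_reflect (fun i => ((2 * j : ℂ) + i)) m]
    refine Finset.prod_congr rfl fun i hi => ?_
    have hi' : i < m := Finset.mem_range.1 hi
    have : ((m - 1 - i : ℕ) : ℂ) = (m : ℂ) - 1 - i := by
      push_cast [Nat.cast_sub (by omega : i ≤ m - 1), Nat.cast_sub (by omega : 1 ≤ m)]
      ring
    rw [this]
    simp [hq]
    push_cast
    ring
  have hczpow : ∀ j : ℕ, c * c ^ (q j - m) = ((κ:ℂ) ^ 2) ^ j := by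
    intro j
    have h1 : q j - m = 2 * (j:ℤ) - 1 := by simp [hq]; ring
    rw [h1, ← zpow_one_add₀ hc0,
      show (1 : ℤ) + (2 * (j:ℤ) - 1) = ((2 * j : ℕ) : ℤ) by push_cast; ring,
      zpow_natCast, pow_mul]
  unfold Ppoly
  push_cast
  simp only [Finset.mul_sum]
  refine Finset.sum_congr rfl fun j hj => ?_
  have hneg : (-1 : ℂ) ^ m * (-1 : ℂ) ^ m = 1 := by
    rw [← pow_add, ← two_mul, pow_mul]; norm_num
  rw [← hpoch j, neg_pow]
  linear_combination
    ((k.choose j : ℂ) * (-1) ^ j * ((pochR (2 * (j:ℝ)) m : ℝ) : ℂ) * ((κ:ℂ) ^ 2) ^ j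
      / (m.factorial : ℂ)) * hneg -
    ((k.choose j : ℂ) * (-1) ^ j * ((m.factorial : ℂ))⁻¹ * ((pochR (2 * (j:ℝ)) m : ℝ) : ℂ))
      * hczpow j
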